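/- Let A be an Artinian local ring with maximal ideal M whose socle satisfies (0 : M) = vA for some v ≠ 0 (A is zero-dimensional Gorenstein), and let b ∈ A be nonzero. Then there exists c ∈ A with 0 ≠ (0 : cA) ⊊ (0 : bA) (i.e., the nonzero Gorenstein ideal (0 : bA) strictly contains another nonzero Gorenstein ideal) if and only if b can be written as a product of two non-units of A. -/

import Mathlib

open IsLocalRing Matrix

set_option linter.unusedSectionVars false

section Gorenstein

variable {A : Type*} [CommRing A] [IsArtinianRing A] [IsLocalRing A]

open Ideal

/-- membership in the annihilator ideal `(0 : I)`. -/
lemma mem_ann0_iff {I : Ideal A} {a : A} :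
    a ∈ (⊥ : Ideal A).colon I ↔ ∀ x ∈ I, a * x = 0 := by
  rw [Submodule.mem_colon]
  simp [smul_eq_mul]

lemma mem_ann0_span_iff {x a : A} :
    a ∈ (⊥ : Ideal A).colon (Ideal.span {x}) ↔ a * x = 0 := by
  rw [mem_ann0_iff]
  constructor
  · intro h
    exact h x (Ideal.mem_span_singleton_self x)
  · intro h y hy
    obtain ⟨t, rfl⟩ := Ideal.mem_span_singleton'.mp hy
    calc a * (t * x) = t * (a * x) := by ring
    _ = 0 := by rw [h, mul_zero]

lemma ann0_antitone {I J : Ideal A} (h : I ≤ J) :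
    (⊥ : Ideal A).colon J ≤ (⊥ : Ideal A).colon I := by
  intro a ha
  rw [mem_ann0_iff] at ha ⊢
  exact fun x hx => ha x (h hx)

lemma ann0_bot : (⊥ : Ideal A).colon (⊥ : Ideal A) = (⊤ : Ideal A) := by
  rw [eq_top_iff]
  intro a _
  rw [mem_ann0_iff]
  intro x hx
  rw [Submodule.mem_bot] at hx
  rw [hx, mul_zero]

lemma ann0_top : (⊥ : Ideal A).colon (⊤ : Ideal A) = (⊥ : Ideal A) := by
  rw [eq_bot_iff]
  intro a ha
  rw [mem_ann0_iff] at ha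
  have := ha 1 trivial
  rw [mul_one] at this
  simpa using this

lemma le_ann0_ann0 {I : Ideal A} : I ≤ (⊥ : Ideal A).colon ((⊥ : Ideal A).colon I) := by
  intro a ha
  rw [mem_ann0_iff]
  intro x hx
  rw [mem_ann0_iff] at hx
  rw [mul_comm]
  exact hx a ha

lemma mem_max_of_nonunit {a : A} (h : ¬IsUnit a) : a ∈ maximalIdeal A := by
  rwa [IsLocalRing.mem_maximalIdeal, mem_nonunits_iff]

/-- the maximal ideal is nilpotent. -/
lemma maxIdeal_nilpotent : ∃ n : ℕ, (maximalIdeal A) ^ n = ⊥ := by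
  obtain ⟨n, hn⟩ := IsArtinianRing.isNilpotent_jacobson_bot (R := A)
  refine ⟨n, ?_⟩
  rw [IsLocalRing.jacobson_eq_maximalIdeal ⊥ bot_ne_top] at hn
  simpa using hn

/-- A module killed by the maximal ideal is semisimple as an `A`-module. -/
lemma torsion_semisimple {Q : Type*} [AddCommGroup Q] [Module A Q]
    (hQ : ∀ a ∈ maximalIdeal A, ∀ x : Q, a • x = 0) : IsSemisimpleModule A Q := by
  have htor : Module.IsTorsionBySet A Q (maximalIdeal A : Set A) := by
    intro x a
    exact hQ a.1 a.2 x
  letI := htor.module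
  let l : Q →ₛₗ[Ideal.Quotient.mk (maximalIdeal A)] Q :=
    { toFun := id
      map_add' := fun _ _ => rfl
      map_smul' := fun a x => (htor.mk_smul a x).symm }
  have hss : IsSemisimpleRing (A ⧸ maximalIdeal A) :=
    IsArtinianRing.isSemisimpleRing_of_isReduced (R := A ⧸ maximalIdeal A)
  exact (LinearMap.isSemisimpleModule_iff_of_bijective l Function.bijective_id).mpr
    inferInstance

/-- Hopkins–Levitzki for our local ring: `A` is Noetherian. -/
lemma isNoetherianA : IsNoetherian A A := by
  obtain ⟨n, hn⟩ := maxIdeal_nilpotent (A := A)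
  have key : ∀ k : ℕ, IsNoetherian A (A ⧸ (maximalIdeal A ^ k : Ideal A)) := by
    intro k
    induction k with
    | zero =>
      have hsub : Subsingleton (A ⧸ (maximalIdeal A ^ 0 : Ideal A)) := by
        rw [pow_zero, Ideal.one_eq_top]
        exact Submodule.Quotient.subsingleton_iff.mpr rfl
      have : Finite (A ⧸ (maximalIdeal A ^ 0 : Ideal A)) := Finite.of_subsingleton
      exact isNoetherian_of_finite A _
    | succ k ih =>
      set Mk1 : Ideal A := maximalIdeal A ^ (k + 1) with hMk1
      set N : Submodule A (A ⧸ Mk1) :=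
        Submodule.map Mk1.mkQ (maximalIdeal A ^ k : Ideal A) with hN
      rw [isNoetherian_iff_submodule_quotient N]
      constructor
      · -- `N` is semisimple and Artinian, hence Noetherian
        have hsemi : IsSemisimpleModule A N := by
          apply torsion_semisimple
          intro a ha x
          obtain ⟨y, hy, hxy⟩ := x.2
          apply Subtype.ext
          show a • (x : A ⧸ Mk1) = 0
          rw [← hxy, ← _root_.map_smul, Submodule.mkQ_apply, Submodule.Quotient.mk_eq_zero]
          show a • y ∈ Mk1
          rw [smul_eq_mul, hMk1, pow_succ, mul_comm (maximalIdeal A ^ k) (maximalIdeal A)]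
          exact Ideal.mul_mem_mul ha hy
        have hart : IsArtinian A N := inferInstance
        exact (IsSemisimpleModule.finite_tfae (R := A) (M := N)).out 2 1 |>.mp hart
      · -- the quotient is isomorphic to `A ⧸ m^k`
        have hle : (Mk1 : Submodule A A) ≤ (maximalIdeal A ^ k : Ideal A) :=
          Ideal.pow_le_pow_right (Nat.le_succ k)
        have e := Submodule.quotientQuotientEquivQuotient Mk1
          (maximalIdeal A ^ k : Ideal A) hle
        haveI := ih
        exact isNoetherian_of_linearEquiv e.symm
  have hthis := key n
  rw [hn] at hthis
  haveI := hthis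
  exact isNoetherian_of_linearEquiv (Submodule.quotEquivOfEqBot (⊥ : Ideal A) rfl)

lemma exists_covby_above {I J : Ideal A} (h : I < J) : ∃ K, I ⋖ K ∧ K ≤ J := by
  have hwf : WellFounded ((· < ·) : Ideal A → Ideal A → Prop) := wellFounded_lt
  obtain ⟨K, hK, hmin⟩ := hwf.has_min {K | I < K ∧ K ≤ J} ⟨J, h, le_refl J⟩
  refine ⟨K, ⟨hK.1, ?_⟩, hK.2⟩
  intro c hc hcK
  exact hmin c ⟨hc, le_of_lt (lt_of_lt_of_le hcK hK.2)⟩ hcK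

lemma exists_covby_below {I J : Ideal A} (h : I < J) : ∃ K, I ≤ K ∧ K ⋖ J := by
  haveI := isNoetherianA (A := A)
  have hwf : WellFounded ((· > ·) : Ideal A → Ideal A → Prop) := wellFounded_gt
  obtain ⟨K, hK, hmax⟩ := hwf.has_min {K | I ≤ K ∧ K < J} ⟨I, le_refl I, h⟩
  refine ⟨K, hK.1, hK.2, ?_⟩
  intro c hc hcJ
  exact hmax c ⟨le_trans hK.1 hc.le, hcJ⟩ hc

lemma exists_cs : ∀ J I : Ideal A, I ≤ J →
    ∃ s : CompositionSeries (Ideal A), s.head = I ∧ s.last = J := by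
  intro J
  induction J using WellFoundedLT.induction with
  | _ J IH =>
    intro I hIJ
    rcases eq_or_lt_of_le hIJ with rfl | hlt
    · exact ⟨RelSeries.singleton _ I, rfl, rfl⟩
    · obtain ⟨K, hIK, hKJ⟩ := exists_covby_below hlt
      obtain ⟨s, hh, hl⟩ := IH K hKJ.lt I hIK
      refine ⟨s.snoc J ?_, ?_, ?_⟩
      · show s.last ⋖ J
        rw [hl]; exact hKJ
      · rw [RelSeries.head_snoc, hh]
      · rw [RelSeries.last_snoc]

lemma cs_head_le_last (s : CompositionSeries (Ideal A)) : s.head ≤ s.last :=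
  CompositionSeries.head_le (Fin.last _)

open scoped Classical in
/-- the length of a composition series from `I` to `J` (or `0` if `¬ I ≤ J`). -/
noncomputable def clen (I J : Ideal A) : ℕ :=
  if h : I ≤ J then (exists_cs J I h).choose.length else 0

lemma clen_eq {I J : Ideal A} {s : CompositionSeries (Ideal A)}
    (hh : s.head = I) (hl : s.last = J) : s.length = clen I J := by
  have hle : I ≤ J := hh ▸ hl ▸ cs_head_le_last s
  rw [clen, dif_pos hle]
  obtain ⟨h1, h2⟩ := (exists_cs J I hle).choose_spec
  exact (CompositionSeries.jordan_holder s _ (by rw [hh, h1]) (by rw [hl, h2])).length_eq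

lemma clen_self (I : Ideal A) : clen I I = 0 :=
  (clen_eq (s := RelSeries.singleton _ I) rfl rfl).symm

lemma clen_covby {I J : Ideal A} (h : I ⋖ J) : clen I J = 1 := by
  have := clen_eq (I := I) (J := J) (s := (RelSeries.singleton _ I).snoc J h) rfl (RelSeries.last_snoc _ _ _)
  exact this.symm.trans rfl

lemma clen_add {I K J : Ideal A} (hIK : I ≤ K) (hKJ : K ≤ J) :
    clen I K + clen K J = clen I J := by
  obtain ⟨s, hs1, hs2⟩ := exists_cs K I hIK
  obtain ⟨t, ht1, ht2⟩ := exists_cs J K hKJ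
  have hconn : s.last = t.head := by rw [hs2, ht1]
  have h1 := clen_eq hs1 hs2
  have h2 := clen_eq ht1 ht2
  have h3 := clen_eq (s := s.smash t hconn)
    (by rw [RelSeries.head_smash, hs1]) (by rw [RelSeries.last_smash, ht2])
  rw [← h1, ← h2, ← h3]
  rfl

lemma clen_eq_zero_iff {I J : Ideal A} (h : I ≤ J) : clen I J = 0 ↔ I = J := by
  constructor
  · intro h0
    obtain ⟨s, hs1, hs2⟩ := exists_cs J I h
    have hlen : s.length = 0 := by rw [clen_eq hs1 hs2, h0]
    have hhl : s.head = s.last := by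
      show s 0 = s (Fin.last _)
      congr 1
      exact Fin.ext (by simp [hlen])
    rw [← hs1, ← hs2, hhl]
  · rintro rfl; exact clen_self I

section WithSocle

variable (v : A) (hv0 : v ≠ 0)
  (hsoc : (⊥ : Ideal A).colon (maximalIdeal A) = Ideal.span {v})

include hsoc in
lemma v_mul_max : ∀ m ∈ maximalIdeal A, v * m = 0 := by
  intro m hm
  have hv : v ∈ (⊥ : Ideal A).colon (maximalIdeal A) := by
    rw [hsoc]; exact Ideal.mem_span_singleton_self v
  exact mem_ann0_iff.mp hv m hm

include hv0 hsoc in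
/-- The socle is contained in every nonzero ideal. -/
lemma v_mem_of_ne_zero {x : A} (hx : x ≠ 0) : v ∈ Ideal.span {x} := by
  obtain ⟨N, hN⟩ := maxIdeal_nilpotent (A := A)
  have hPN : Ideal.span {x} * (maximalIdeal A) ^ N = ⊥ := by
    rw [hN, mul_bot]
  have hex : ∃ k, Ideal.span {x} * (maximalIdeal A) ^ k = ⊥ := ⟨N, hPN⟩
  classical
  set n := Nat.find hex with hn
  have hn0 : n ≠ 0 := by
    intro h0
    have := Nat.find_spec hex
    rw [← hn, h0, pow_zero, Ideal.one_eq_top, mul_top] at this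
    exact hx (Ideal.span_singleton_eq_bot.mp this)
  have hne : Ideal.span {x} * (maximalIdeal A) ^ (n - 1) ≠ ⊥ :=
    Nat.find_min hex (by omega)
  obtain ⟨y, hy, hy0⟩ := Submodule.exists_mem_ne_zero_of_ne_bot hne
  have hyv : y ∈ Ideal.span {v} := by
    rw [← hsoc, mem_ann0_iff]
    intro m hm
    have hmem : y * m ∈ Ideal.span {x} * (maximalIdeal A) ^ (n - 1) * maximalIdeal A :=
      Ideal.mul_mem_mul hy hm
    rw [mul_assoc, ← pow_succ, Nat.sub_add_cancel (Nat.pos_of_ne_zero hn0), hn,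
      Nat.find_spec hex] at hmem
    simpa using hmem
  obtain ⟨t, ht⟩ := Ideal.mem_span_singleton'.mp hyv
  have htu : IsUnit t := by
    by_contra htu
    have : t * v = 0 := by rw [mul_comm]; exact v_mul_max v hsoc t (mem_max_of_nonunit htu)
    rw [ht] at this
    exact hy0 this
  obtain ⟨u, rfl⟩ := htu
  have hv : v = (↑u⁻¹ : A) * y := by
    rw [← ht, ← mul_assoc]
    simp
  have : v ∈ Ideal.span {x} * (maximalIdeal A) ^ (n - 1) := by
    rw [hv]
    exact Ideal.mul_mem_left _ _ hy
  exact Ideal.mul_le_left this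

include hv0 hsoc in
/-- The crucial covering step: annihilation drops by at most a simple step. -/
lemma ann0_step {I J : Ideal A} (hIJ : I ⋖ J) :
    (⊥ : Ideal A).colon J = (⊥ : Ideal A).colon I ∨
      (⊥ : Ideal A).colon J ⋖ (⊥ : Ideal A).colon I := by
  haveI := isNoetherianA (A := A)
  obtain ⟨x, hxJ, hxI⟩ := SetLike.exists_of_lt hIJ.lt
  have hJ : J = I ⊔ Ideal.span {x} := by
    have hle : I ⊔ Ideal.span {x} ≤ J :=
      sup_le hIJ.le ((Ideal.span_singleton_le_iff_mem _).mpr hxJ)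
    have hlt : I < I ⊔ Ideal.span {x} := by
      refine lt_of_le_of_ne le_sup_left ?_
      intro heq
      apply hxI
      have hsp : Ideal.span {x} ≤ I := by rw [heq]; exact le_sup_right
      exact hsp (Ideal.mem_span_singleton_self x)
    exact ((lt_or_eq_of_le hle).resolve_left (hIJ.2 hlt)).symm
  have hMJ : maximalIdeal A • J ≤ I := by
    by_contra hnot
    have hne : I ⊔ maximalIdeal A • J ≠ I := by
      intro heq
      exact hnot (le_sup_right.trans heq.le)
    have hlt : I < I ⊔ maximalIdeal A • J := lt_of_le_of_ne le_sup_left (Ne.symm hne)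
    have hle : I ⊔ maximalIdeal A • J ≤ J := sup_le hIJ.le Submodule.smul_le_right
    have heq : I ⊔ maximalIdeal A • J = J := (lt_or_eq_of_le hle).resolve_left (hIJ.2 hlt)
    have hNak : J ≤ I := by
      apply Submodule.le_of_le_smul_of_le_jacobson_bot (IsNoetherian.noetherian J)
      · rw [IsLocalRing.jacobson_eq_maximalIdeal ⊥ bot_ne_top]
      · rw [heq]
    exact absurd hNak (not_le_of_gt hIJ.lt)
  have hkills : ∀ a ∈ (⊥ : Ideal A).colon I, a * x = 0 → a ∈ (⊥ : Ideal A).colon J := by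
    intro a ha hax
    rw [mem_ann0_iff] at ha ⊢
    intro y hy
    rw [hJ] at hy
    obtain ⟨i, hi, z, hz, rfl⟩ := Submodule.mem_sup.mp hy
    obtain ⟨t, rfl⟩ := Ideal.mem_span_singleton'.mp hz
    have h1 : a * (t * x) = t * (a * x) := by ring
    rw [mul_add, ha i hi, h1, hax, mul_zero, add_zero]
  have hxm_mem : ∀ m ∈ maximalIdeal A, x * m ∈ I := by
    intro m hm
    have hmx : m • x ∈ maximalIdeal A • J := Submodule.smul_mem_smul hm hxJ
    have hmx2 : x * m ∈ maximalIdeal A • J := by rw [mul_comm]; exact hmx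
    exact hMJ hmx2
  have hsocle : ∀ a ∈ (⊥ : Ideal A).colon I, a * x ∈ Ideal.span {v} := by
    intro a ha
    rw [← hsoc, mem_ann0_iff]
    intro m hm
    rw [mul_assoc]
    exact mem_ann0_iff.mp ha (x * m) (hxm_mem m hm)
  by_cases hcase : ∀ a ∈ (⊥ : Ideal A).colon I, a * x = 0
  · left
    refine le_antisymm (ann0_antitone hIJ.le) ?_
    intro a ha
    exact hkills a ha (hcase a ha)
  · right
    push_neg at hcase
    obtain ⟨a₀, ha₀, ha₀x⟩ := hcase
    have hlt : (⊥ : Ideal A).colon J < (⊥ : Ideal A).colon I := by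
      refine lt_of_le_of_ne (ann0_antitone hIJ.le) ?_
      intro heq
      have : a₀ ∈ (⊥ : Ideal A).colon J := heq ▸ ha₀
      exact ha₀x (mem_ann0_iff.mp this x hxJ)
    refine ⟨hlt, ?_⟩
    intro L hJL hLI
    -- find l₀ ∈ L with l₀ * x ≠ 0
    have hex : ∃ l₀ ∈ L, l₀ * x ≠ 0 := by
      by_contra hno
      push_neg at hno
      have : L ≤ (⊥ : Ideal A).colon J := fun l hl =>
        hkills l (hLI.le hl) (hno l hl)
      exact absurd this (not_le_of_gt hJL)
    obtain ⟨l₀, hl₀L, hl₀x⟩ := hex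
    have hl₀I : l₀ ∈ (⊥ : Ideal A).colon I := hLI.le hl₀L
    have hw : l₀ * x ∈ Ideal.span {v} := hsocle l₀ hl₀I
    obtain ⟨t, ht⟩ := Ideal.mem_span_singleton'.mp hw
    have htu : IsUnit t := by
      by_contra htu
      have h0 : t * v = 0 := by
        rw [mul_comm]; exact v_mul_max v hsoc t (mem_max_of_nonunit htu)
      rw [ht] at h0
      exact hl₀x h0
    obtain ⟨u, rfl⟩ := htu
    have hveq : v = (↑u⁻¹ : A) * (l₀ * x) := by rw [← ht, ← mul_assoc]; simp
    -- now show ann0 I ≤ L, contradicting L < ann0 I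
    have hIL : (⊥ : Ideal A).colon I ≤ L := by
      intro a ha
      obtain ⟨s, hs⟩ := Ideal.mem_span_singleton'.mp (hsocle a ha)
      set l₁ : A := s * (↑u⁻¹ : A) * l₀ with hl₁
      have hl₁L : l₁ ∈ L := Ideal.mul_mem_left _ _ hl₀L
      have hl₁x : l₁ * x = a * x := by
        have h2 : l₁ * x = s * ((↑u⁻¹ : A) * (l₀ * x)) := by rw [hl₁]; ring
        rw [h2, ← hveq, hs]
      have hsub : a - l₁ ∈ (⊥ : Ideal A).colon J := by
        apply hkills
        · exact Submodule.sub_mem _ ha (hLI.le hl₁L)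
        · rw [sub_mul, hl₁x, sub_self]
      have hmem : a - l₁ ∈ L := hJL.le hsub
      have := Submodule.add_mem L hmem hl₁L
      simpa using this
    exact absurd hLI (not_lt_of_ge hIL)

include hv0 hsoc in
lemma colen_le_len_ann : ∀ n : ℕ, ∀ I : Ideal A, clen ⊥ I = n →
    clen I ⊤ ≤ clen ⊥ ((⊥ : Ideal A).colon I) := by
  intro n
  induction n using Nat.strong_induction_on with
  | _ n IH =>
    intro I hI
    by_cases hbot : I = ⊥
    · subst hbot
      rw [ann0_bot]
    · obtain ⟨K, -, hKI⟩ := exists_covby_below (bot_lt_iff_ne_bot.mpr hbot)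
      have h1 : clen ⊥ K + 1 = clen ⊥ I := by
        rw [← clen_covby hKI]; exact clen_add bot_le hKI.le
      have hKn : clen ⊥ K < n := by omega
      have hIH := IH _ hKn K rfl
      have h2 : 1 + clen I ⊤ = clen K ⊤ := by
        rw [← clen_covby hKI]; exact clen_add hKI.le le_top
      rcases ann0_step v hv0 hsoc hKI with heq | hcov
      · rw [← heq] at hIH; omega
      · have h3 : clen ⊥ ((⊥ : Ideal A).colon I) + 1 = clen ⊥ ((⊥ : Ideal A).colon K) := by
          rw [← clen_covby hcov]; exact clen_add bot_le hcov.le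
        omega

include hv0 hsoc in
lemma len_ann_le_colen : ∀ n : ℕ, ∀ I : Ideal A, clen I ⊤ = n →
    clen ⊥ ((⊥ : Ideal A).colon I) ≤ clen I ⊤ := by
  intro n
  induction n using Nat.strong_induction_on with
  | _ n IH =>
    intro I hI
    by_cases htop : I = ⊤
    · subst htop
      rw [ann0_top, clen_self]
      omega
    · obtain ⟨K, hIK, -⟩ := exists_covby_above (lt_top_iff_ne_top.mpr htop)
      have h1 : 1 + clen K ⊤ = clen I ⊤ := by
        rw [← clen_covby hIK]; exact clen_add hIK.le le_top
      have hKn : clen K ⊤ < n := by omega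
      have hIH := IH _ hKn K rfl
      rcases ann0_step v hv0 hsoc hIK with heq | hcov
      · rw [← heq]; omega
      · have h3 : clen ⊥ ((⊥ : Ideal A).colon I) = clen ⊥ ((⊥ : Ideal A).colon K) + 1 := by
          rw [← clen_covby hcov, ← clen_add bot_le hcov.le]
        omega

include hv0 hsoc in
lemma ann0_ann0 (I : Ideal A) : (⊥ : Ideal A).colon ((⊥ : Ideal A).colon I) = I := by
  have e1 : ∀ J : Ideal A, clen ⊥ ((⊥ : Ideal A).colon J) = clen J ⊤ := fun J =>
    le_antisymm (len_ann_le_colen v hv0 hsoc _ J rfl)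
      (colen_le_len_ann v hv0 hsoc _ J rfl)
  have add1 : ∀ J : Ideal A, clen ⊥ J + clen J ⊤ = clen ⊥ ⊤ := fun J =>
    clen_add bot_le le_top
  have h1 := e1 I
  have h2 := e1 ((⊥ : Ideal A).colon I)
  have h3 := add1 I
  have h4 := add1 ((⊥ : Ideal A).colon I)
  have h5 : clen ⊥ ((⊥ : Ideal A).colon ((⊥ : Ideal A).colon I)) = clen ⊥ I := by omega
  have h6 : clen ⊥ I + clen I ((⊥ : Ideal A).colon ((⊥ : Ideal A).colon I)) =
      clen ⊥ ((⊥ : Ideal A).colon ((⊥ : Ideal A).colon I)) :=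
    clen_add bot_le le_ann0_ann0
  have h7 : clen I ((⊥ : Ideal A).colon ((⊥ : Ideal A).colon I)) = 0 := by omega
  exact ((clen_eq_zero_iff le_ann0_ann0).mp h7).symm

include hv0 hsoc in
lemma dual_div {b c : A}
    (h : (⊥ : Ideal A).colon (Ideal.span {c}) ≤ (⊥ : Ideal A).colon (Ideal.span {b})) :
    b ∈ Ideal.span {c} := by
  have hh := ann0_antitone h
  rw [ann0_ann0 v hv0 hsoc, ann0_ann0 v hv0 hsoc] at hh
  exact hh (Ideal.mem_span_singleton_self b)

end WithSocle

lemma ann_span_ne_bot {p : A} (hp0 : p ≠ 0) (hpu : ¬IsUnit p) :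
    (⊥ : Ideal A).colon (Ideal.span {p}) ≠ ⊥ := by
  obtain ⟨N, hN⟩ := maxIdeal_nilpotent (A := A)
  have hpm : p ∈ maximalIdeal A := mem_max_of_nonunit hpu
  have hpN : p ^ N = 0 := by
    have hmem : p ^ N ∈ (maximalIdeal A) ^ N := Ideal.pow_mem_pow hpm N
    rw [hN] at hmem
    simpa using hmem
  have hex : ∃ k, p ^ k = 0 := ⟨N, hpN⟩
  classical
  set n := Nat.find hex with hn
  have hn0 : n ≠ 0 := by
    intro h0
    have := Nat.find_spec hex
    rw [← hn, h0, pow_zero] at this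
    exact one_ne_zero this
  have he : p ^ (n - 1) ≠ 0 := Nat.find_min hex (by omega)
  have hemem : p ^ (n - 1) ∈ (⊥ : Ideal A).colon (Ideal.span {p}) := by
    rw [mem_ann0_span_iff, ← pow_succ, Nat.sub_add_cancel (Nat.pos_of_ne_zero hn0), hn]
    exact Nat.find_spec hex
  intro hbot
  rw [hbot] at hemem
  exact he (by simpa using hemem)

end Gorenstein

/-- **Proposition 3.2 (i).** Let `A` be a zero-dimensional Gorenstein local ring (Artinian
local with socle `(0 : M) = vA`, `v ≠ 0`) and let `b ∈ A` be nonzero. Then the nonzero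
Gorenstein ideal `(0 : bA)` strictly contains another nonzero Gorenstein ideal `(0 : cA)`
if and only if `b` can be written as the product of two non-units. -/
theorem stmt_11 {A : Type*} [CommRing A] [IsArtinianRing A] [IsLocalRing A]
    (v : A) (hv0 : v ≠ 0)
    (hsoc : (⊥ : Ideal A).colon (maximalIdeal A) = Ideal.span {v})
    (b : A) (hb : b ≠ 0) :
    (∃ c : A, (⊥ : Ideal A).colon (Ideal.span {c}) ≠ ⊥ ∧
        (⊥ : Ideal A).colon (Ideal.span {c}) < (⊥ : Ideal A).colon (Ideal.span {b})) ↔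
      ∃ p q : A, ¬ IsUnit p ∧ ¬ IsUnit q ∧ b = p * q := by
  constructor
  · rintro ⟨c, hne, hlt⟩
    have hcu : ¬IsUnit c := by
      intro h
      apply hne
      rw [Ideal.span_singleton_eq_top.mpr h, ann0_top]
    have hbc : b ∈ Ideal.span {c} := dual_div v hv0 hsoc hlt.le
    obtain ⟨t, ht⟩ := Ideal.mem_span_singleton'.mp hbc
    have htu : ¬IsUnit t := by
      intro htu
      apply hlt.ne
      ext a
      rw [mem_ann0_span_iff, mem_ann0_span_iff]
      obtain ⟨u, rfl⟩ := htu
      constructor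
      · intro h
        calc a * b = (u : A) * (a * c) := by rw [← ht]; ring
        _ = 0 := by rw [h, mul_zero]
      · intro h
        have h3 : (u : A) * (a * c) = a * b := by rw [← ht]; ring
        have h4 : ((u⁻¹ : Aˣ) : A) * ((u : A) * (a * c)) = a * c := by
          rw [← mul_assoc, Units.inv_mul, one_mul]
        rw [← h4, h3, h, mul_zero]
    exact ⟨t, c, htu, hcu, ht.symm⟩
  · rintro ⟨p, q, hpu, hqu, hpq⟩
    have hp0 : p ≠ 0 := by
      rintro rfl
      rw [zero_mul] at hpq
      exact hb hpq
    refine ⟨p, ann_span_ne_bot hp0 hpu, ?_⟩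
    have hle : (⊥ : Ideal A).colon (Ideal.span {p}) ≤ (⊥ : Ideal A).colon (Ideal.span {b}) := by
      intro a ha
      rw [mem_ann0_span_iff] at ha ⊢
      rw [hpq, ← mul_assoc, ha, zero_mul]
    obtain ⟨s, hs⟩ := Ideal.mem_span_singleton'.mp (v_mem_of_ne_zero v hv0 hsoc hp0)
    have hsb : s ∈ (⊥ : Ideal A).colon (Ideal.span {b}) := by
      rw [mem_ann0_span_iff, hpq, ← mul_assoc, hs]
      exact v_mul_max v hsoc q (mem_max_of_nonunit hqu)
    have hsp : s ∉ (⊥ : Ideal A).colon (Ideal.span {p}) := by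
      rw [mem_ann0_span_iff, hs]
      exact hv0
    exact lt_of_le_of_ne hle (fun h => hsp (h ▸ hsb))
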